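/- Suppose ‖∇f_j(x_j^s)‖ ≤ G_max for all agents j and all iterations s, and suppose at the combination time t⁰ (a multiple of E) the disagreement bound ‖x_j^{t⁰} − x_i^{t⁰}‖ ≤ ε holds for all agents i, j. Then for every pair of agents i, j and every t with t⁰ ≤ t ≤ t⁰ + E − 1, the inexact MUSIC iterates satisfy ‖x_j^t − x̄_i^t‖ ≤ 4α(t − t⁰)G_max + ε, where x̄_i^t = Σ_{l=1}^N w_il x_l^t. (Paper's Lemma 3, bounded disagreement.) -/
import Mathlib


open Finset

/-- Paper's Lemma 3 (bounded disagreement for inexact MUSIC). -/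
theorem inexact_music_bounded_disagreement
    {N p : ℕ}
    (f : Fin N → EuclideanSpace ℝ (Fin p) → ℝ)
    (g : Fin N → EuclideanSpace ℝ (Fin p) → EuclideanSpace ℝ (Fin p))
    (W : Fin N → Fin N → ℝ)
    (hWsymm : ∀ i j, W i j = W j i)
    (hWnonneg : ∀ i j, 0 ≤ W i j)
    (hWrow : ∀ i, ∑ j, W i j = 1)
    (α : ℝ) (hα : 0 < α) (E : ℕ) (hE : 1 ≤ E)
    (x v : ℕ → Fin N → EuclideanSpace ℝ (Fin p))
    (hv : ∀ t i, v (t + 1) i = x t i - α • g i (x t i))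
    (hx1 : ∀ t i, ¬ E ∣ (t + 1) → x (t + 1) i = v (t + 1) i)
    (hx2 : ∀ t i, E ∣ (t + 1) → x (t + 1) i = ∑ j, W i j • v (t + 1) j)
    (Gmax : ℝ)
    (hG : ∀ s j, ‖g j (x s j)‖ ≤ Gmax)
    (t0 : ℕ) (ht0 : E ∣ t0)
    (hcomb : ∀ j, x t0 j = ∑ l, W j l • x t0 l)
    (ε : ℝ)
    (hdis : ∀ i j, ‖x t0 j - x t0 i‖ ≤ ε)
    (t : ℕ) (ht : t0 ≤ t) (ht' : t ≤ t0 + E - 1) :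
    ∀ i j, ‖x t j - ∑ l, W i l • x t l‖ ≤ 4 * α * ((t - t0 : ℕ) : ℝ) * Gmax + ε := by
  intro i j
  obtain ⟨k, rfl⟩ : ∃ k, t = t0 + k := ⟨t - t0, by omega⟩
  have hkE : k ≤ E - 1 := by omega
  have hGnn : 0 ≤ Gmax := le_trans (norm_nonneg _) (hG t0 j)
  -- key unrolling lemma
  have key : ∀ m, m ≤ E - 1 → ∀ l,
      x (t0 + m) l = x t0 l - α • ∑ s ∈ Finset.Ico t0 (t0 + m), g l (x s l) := by
    intro m
    induction m with
    | zero => intro _ l; simp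
    | succ m ih =>
      intro hm l
      have hnd : ¬ E ∣ (t0 + m + 1) := by
        intro hd
        rw [Nat.add_assoc] at hd
        have h2 : E ∣ (m + 1) := (Nat.dvd_add_right ht0).mp hd
        have := Nat.le_of_dvd (by omega) h2
        omega
      have hstep : x (t0 + (m + 1)) l = x (t0 + m) l - α • g l (x (t0 + m) l) := by
        have h1 := hx1 (t0 + m) l hnd
        have h2 := hv (t0 + m) l
        show x ((t0 + m) + 1) l = _
        rw [h1, h2]
      rw [hstep, show t0 + (m + 1) = (t0 + m) + 1 from rfl,
        Finset.sum_Ico_succ_top (by omega), smul_add, ih (by omega) l]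
      abel
  set S : Fin N → EuclideanSpace ℝ (Fin p) :=
    fun l => ∑ s ∈ Finset.Ico t0 (t0 + k), g l (x s l) with hSdef
  have h1 : ∀ l, x (t0 + k) l = x t0 l - α • S l := key k hkE
  have hS : ∀ l, ‖S l‖ ≤ (k : ℝ) * Gmax := by
    intro l
    calc ‖S l‖ ≤ ∑ s ∈ Finset.Ico t0 (t0 + k), ‖g l (x s l)‖ := norm_sum_le _ _
    _ ≤ ∑ s ∈ Finset.Ico t0 (t0 + k), Gmax := by
        exact Finset.sum_le_sum fun s _ => hG s l
    _ = (k : ℝ) * Gmax := by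
        rw [Finset.sum_const, Nat.card_Ico]
        simp [Nat.add_sub_cancel_left]
  have havg : ∑ l, W i l • x (t0 + k) l = x t0 i - α • ∑ l, W i l • S l := by
    simp only [h1, smul_sub]
    rw [Finset.sum_sub_distrib, ← hcomb i, Finset.smul_sum]
    congr 1
    exact Finset.sum_congr rfl fun l _ => (smul_comm _ _ _)
  have heq : x (t0 + k) j - ∑ l, W i l • x (t0 + k) l
      = (x t0 j - x t0 i) + α • ((∑ l, W i l • S l) - S j) := by
    rw [h1 j, havg, smul_sub]
    abel
  have havgnorm : ‖∑ l, W i l • S l‖ ≤ (k : ℝ) * Gmax := by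
    calc ‖∑ l, W i l • S l‖ ≤ ∑ l, ‖W i l • S l‖ := norm_sum_le _ _
    _ ≤ ∑ l, W i l * ((k : ℝ) * Gmax) := by
        refine Finset.sum_le_sum fun l _ => ?_
        rw [norm_smul, Real.norm_eq_abs, abs_of_nonneg (hWnonneg i l)]
        exact mul_le_mul_of_nonneg_left (hS l) (hWnonneg i l)
    _ = (k : ℝ) * Gmax := by rw [← Finset.sum_mul, hWrow i, one_mul]
  have hkcast : ((t0 + k - t0 : ℕ) : ℝ) = (k : ℝ) := by
    norm_cast
    omega
  rw [heq, hkcast]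
  have hn1 : ‖α • ((∑ l, W i l • S l) - S j)‖ ≤ α * (2 * ((k : ℝ) * Gmax)) := by
    rw [norm_smul, Real.norm_eq_abs, abs_of_pos hα]
    have := norm_sub_le (∑ l, W i l • S l) (S j)
    have := hS j
    nlinarith
  calc ‖(x t0 j - x t0 i) + α • ((∑ l, W i l • S l) - S j)‖
      ≤ ‖x t0 j - x t0 i‖ + ‖α • ((∑ l, W i l • S l) - S j)‖ := norm_add_le _ _
    _ ≤ ε + α * (2 * ((k : ℝ) * Gmax)) := add_le_add (hdis i j) hn1
    _ ≤ 4 * α * (k : ℝ) * Gmax + ε := by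
        have h0 : 0 ≤ α * ((k : ℝ) * Gmax) := by positivity
        nlinarith
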